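/- Let D, D' ∈ T_n and suppose D is I(D')-compatible. Then either |I(D)| > |I(D')|, or |I(D)| = |I(D')| and I(D) is lexicographically less than or equal to I(D') (comparing the two sets as increasing sequences). -/

import Mathlib

open scoped Classical
noncomputable section

/-- `D` is a symmetric Temperley–Lieb diagram on `4n` vertices, identified with a partial
matching of `[2n] = {1,…,2n}`: a set of pairwise disjoint pairs `(i,j)` with `1 ≤ i < j ≤ 2n`,
noncrossing, and such that no uncovered vertex lies strictly between the endpoints of any pair. -/
def IsTL (n : ℕ) (D : Finset (ℕ × ℕ)) : Prop :=
  (∀ p ∈ D, 1 ≤ p.1 ∧ p.1 < p.2 ∧ p.2 ≤ 2 * n) ∧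
  (∀ p ∈ D, ∀ q ∈ D, p ≠ q → p.1 ≠ q.1 ∧ p.1 ≠ q.2 ∧ p.2 ≠ q.1 ∧ p.2 ≠ q.2) ∧
  (∀ p ∈ D, ∀ q ∈ D, ¬(p.1 < q.1 ∧ q.1 < p.2 ∧ p.2 < q.2)) ∧
  (∀ p ∈ D, ∀ k, p.1 < k → k < p.2 → ∃ q ∈ D, k = q.1 ∨ k = q.2)

/-- `I(D) ⊆ [2n]`: the vertices not covered by `D` together with the smaller element of each
pair of `D`; equivalently, the vertices of `[2n]` that are not the larger element of a pair. -/
def ID (n : ℕ) (D : Finset (ℕ × ℕ)) : Finset ℕ :=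
  (Finset.Icc 1 (2 * n)).filter fun k => ¬ ∃ p ∈ D, p.2 = k

/-- `D` is `I`-compatible: every pair of `D` contains exactly one element of `I`. -/
def Compat (I : Finset ℕ) (D : Finset (ℕ × ℕ)) : Prop :=
  ∀ p ∈ D, (p.1 ∈ I ∧ p.2 ∉ I) ∨ (p.1 ∉ I ∧ p.2 ∈ I)

/-- Bridge between finset filter cardinality and `countP` on the sorted list. -/
lemma card_filter_eq_countP_sort (s : Finset ℕ) (p : ℕ → Prop) [DecidablePred p] :
    (s.filter p).card = (s.sort (· ≤ ·)).countP (fun m => p m) := by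
  have : (s.filter p).card = Multiset.countP p s.val := by
    simp [Finset.filter, Finset.card, Multiset.countP_eq_card_filter]
  rw [this, ← Finset.sort_eq (r := (· ≤ ·)) (s := s), Multiset.coe_countP]

/-- At the first lexicographic difference of two strictly sorted lists of the same
length, the counting functions flip. -/
lemma lex_exists_countP_lt : ∀ {l₁ l₂ : List ℕ}, List.Lex (· < ·) l₁ l₂ →
    l₁.Pairwise (· < ·) → l₂.Pairwise (· < ·) → l₁.length = l₂.length →
    ∃ k, l₂.countP (fun m => decide (m ≤ k)) < l₁.countP (fun m => decide (m ≤ k)) := by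
  intro l₁ l₂ h
  induction h with
  | nil => intro _ _ hlen; simp at hlen
  | @rel a l₁ b l₂ hab =>
    intro _ h₂ _
    refine ⟨a, ?_⟩
    have h0 : (b :: l₂).countP (fun m => decide (m ≤ a)) = 0 := by
      rw [List.countP_eq_zero]
      intro x hx
      have hbx : b ≤ x := by
        rcases List.mem_cons.mp hx with rfl | hx
        · exact le_refl x
        · exact le_of_lt ((List.pairwise_cons.mp h₂).1 x hx)
      simp only [decide_eq_true_eq]
      omega
    rw [h0]
    have : 0 < (a :: l₁).countP (fun m => decide (m ≤ a)) := by
      rw [List.countP_cons]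
      simp
    exact this
  | @cons a l₁ l₂ h ih =>
    intro h₁ h₂ hlen
    obtain ⟨k, hk⟩ := ih (List.pairwise_cons.mp h₁).2 (List.pairwise_cons.mp h₂).2
      (by simpa using hlen)
    refine ⟨k, ?_⟩
    rw [List.countP_cons, List.countP_cons]
    omega

/-- Key counting lemma: for every `k`, the number of elements `≤ k` of `I(D')` is at most
that of `I(D)`. -/
lemma countA (n : ℕ) (D D' : Finset (ℕ × ℕ)) (hD : IsTL n D)
    (hc : Compat (ID n D') D) (k : ℕ) :
    ((ID n D').filter (· ≤ k)).card ≤ ((ID n D).filter (· ≤ k)).card := by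
  set T : Finset ℕ := (Finset.Icc 1 (2 * n)).filter (· ≤ k) with hT
  have hsplit : ∀ E : Finset (ℕ × ℕ),
      ((ID n E).filter (· ≤ k)).card
        = T.card - (T.filter (fun m => ∃ p ∈ E, p.2 = m)).card ∧
      (T.filter (fun m => ∃ p ∈ E, p.2 = m)).card ≤ T.card := by
    intro E
    have h1 : (ID n E).filter (· ≤ k) = T.filter (fun m => ¬ ∃ p ∈ E, p.2 = m) := by
      rw [ID, hT, Finset.filter_comm]
    have h2 := Finset.card_filter_add_card_filter_not
      (s := T) (p := fun m => ∃ p ∈ E, p.2 = m)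
    constructor
    · rw [h1]; omega
    · omega
  obtain ⟨e1, _⟩ := hsplit D
  obtain ⟨e1', e2'⟩ := hsplit D'
  rw [e1, e1']
  -- reduce to comparing the "large endpoint" counts
  have main : (T.filter (fun m => ∃ p ∈ D, p.2 = m)).card
      ≤ (T.filter (fun m => ∃ p ∈ D', p.2 = m)).card := by
    have himg : T.filter (fun m => ∃ p ∈ D, p.2 = m)
        = (D.filter (fun p => p.2 ≤ k)).image Prod.snd := by
      ext m
      simp only [Finset.mem_filter, Finset.mem_image, hT, Finset.mem_Icc]
      constructor
      · rintro ⟨⟨hm, hmk⟩, p, hp, rfl⟩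
        exact ⟨p, ⟨hp, hmk⟩, rfl⟩
      · rintro ⟨p, ⟨hp, hpk⟩, rfl⟩
        obtain ⟨h1, h2, h3⟩ := hD.1 p hp
        exact ⟨⟨⟨by omega, h3⟩, hpk⟩, p, hp, rfl⟩
    have hinj : Set.InjOn Prod.snd ((D.filter (fun p => p.2 ≤ k) : Finset (ℕ × ℕ)) : Set (ℕ × ℕ)) := by
      intro p hp q hq hpq
      simp only [Finset.coe_filter, Set.mem_setOf_eq] at hp hq
      by_contra hne
      exact (hD.2.1 p hp.1 q hq.1 hne).2.2.2 hpq
    rw [himg, Finset.card_image_of_injOn hinj]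
    -- injection into the large endpoints of D'
    refine Finset.card_le_card_of_injOn
      (fun p => if p.1 ∈ ID n D' then p.2 else p.1) ?_ ?_
    · intro p hp
      simp only [Finset.mem_coe, Finset.mem_filter] at hp
      obtain ⟨hpD, hpk⟩ := hp
      obtain ⟨h1, h2, h3⟩ := hD.1 p hpD
      have hmem : ∀ m, 1 ≤ m → m ≤ 2 * n → m ∉ ID n D' → ∃ q ∈ D', q.2 = m := by
        intro m hm1 hm2 hm
        by_contra hno
        exact hm (Finset.mem_filter.mpr ⟨Finset.mem_Icc.mpr ⟨hm1, hm2⟩, hno⟩)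
      dsimp only
      rcases hc p hpD with ⟨hin, hout⟩ | ⟨hout, hin⟩
      · rw [if_pos hin]
        simp only [Finset.mem_coe, hT, Finset.mem_filter, Finset.mem_Icc]
        exact ⟨⟨⟨by omega, h3⟩, hpk⟩, hmem p.2 (by omega) h3 hout⟩
      · rw [if_neg hout]
        simp only [Finset.mem_coe, hT, Finset.mem_filter, Finset.mem_Icc]
        exact ⟨⟨⟨h1, by omega⟩, by omega⟩, hmem p.1 h1 (by omega) hout⟩
    · intro p hp q hq hpq
      simp only [Finset.coe_filter, Set.mem_setOf_eq] at hp hq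
      by_contra hne
      obtain ⟨d1, d2, d3, d4⟩ := hD.2.1 p hp.1 q hq.1 hne
      dsimp only at hpq
      rcases ite_eq_or_eq (p.1 ∈ ID n D') p.2 p.1 with h | h <;>
        rcases ite_eq_or_eq (q.1 ∈ ID n D') q.2 q.1 with h' | h' <;>
        rw [h, h'] at hpq
      · exact d4 hpq
      · exact d3 hpq
      · exact d2 hpq
      · exact d1 hpq
  omega

/-- If `D, D' ∈ T_n` and `D` is `I(D')`-compatible, then either `|I(D)| > |I(D')|`, or
`|I(D)| = |I(D')|` and `I(D)` is lexicographically ≤ `I(D')` as increasing sequences. -/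
theorem compat_lex (n : ℕ) (D D' : Finset (ℕ × ℕ)) (hD : IsTL n D) (hD' : IsTL n D')
    (hc : Compat (ID n D') D) :
    (ID n D').card < (ID n D).card ∨
    ((ID n D).card = (ID n D').card ∧
      (ID n D = ID n D' ∨
        List.Lex (· < ·) ((ID n D).sort (· ≤ ·)) ((ID n D').sort (· ≤ ·)))) := by
  have hfull : ∀ E : Finset (ℕ × ℕ), (ID n E).filter (· ≤ 2 * n) = ID n E := by
    intro E
    apply Finset.filter_true_of_mem
    intro m hm
    exact (Finset.mem_Icc.mp (Finset.mem_filter.mp hm).1).2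
  have hcard : (ID n D').card ≤ (ID n D).card := by
    have := countA n D D' hD hc (2 * n)
    rwa [hfull, hfull] at this
  rcases lt_or_eq_of_le hcard with hlt | heq
  · exact Or.inl hlt
  · refine Or.inr ⟨heq.symm, ?_⟩
    have htri : List.Lex (· < ·) ((ID n D).sort (· ≤ ·)) ((ID n D').sort (· ≤ ·)) ∨
        (ID n D).sort (· ≤ ·) = (ID n D').sort (· ≤ ·) ∨
        List.Lex (· < ·) ((ID n D').sort (· ≤ ·)) ((ID n D).sort (· ≤ ·)) :=
      trichotomous_of (List.Lex (· < ·)) _ _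
    rcases htri with h | h | h
    · exact Or.inr h
    · refine Or.inl ?_
      ext m
      rw [← Finset.mem_sort (α := ℕ) (· ≤ ·), h, Finset.mem_sort]
    · exfalso
      obtain ⟨k, hk⟩ := lex_exists_countP_lt h
        (Finset.sortedLT_sort _).pairwise (Finset.sortedLT_sort _).pairwise
        (by rw [Finset.length_sort, Finset.length_sort, heq])
      have hA := countA n D D' hD hc k
      rw [card_filter_eq_countP_sort, card_filter_eq_countP_sort] at hA
      exact absurd hA (not_le.mpr hk)
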